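/- arXiv:2411.09987 — 6 statements merged into one kernel-verified Lean document; each statement's English description precedes it below -/
import Mathlib

section
/- Let M be a simple matroid with a basis b = {b_0,...,b_d} such that the sets F_{ij} = cl{b_i,b_j} \ {b_i,b_j} partition E(M)\b into pairwise disjoint subsets (a Cremona basis). If F is a flat of M whose support graph G_b(F) is connected (vertices: basis elements b_i in F or with some F_{ij} meeting F; edges: elements of F ∩ F_{ij}), then either F ∩ b equals the full vertex set supp_b(F), or F ∩ b = ∅. -/
open Set

variable {α : Type*}

/-- The set of non-basis elements on the line through `x` and `y`. -/
def Fij (M : Matroid α) (x y : α) : Set α := M.closure {x, y} \ {x, y}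

/-- `b` is a Cremona basis: a base of `M` such that the sets
`Fij = cl{bᵢ,bⱼ} \ {bᵢ,bⱼ}` are pairwise disjoint with union `M.E \ b`. -/
def IsCremonaBasis (M : Matroid α) (b : Set α) : Prop :=
  M.IsBase b ∧
  (∀ x ∈ b, ∀ y ∈ b, ∀ x' ∈ b, ∀ y' ∈ b, x ≠ y → x' ≠ y' →
    ({x, y} : Set α) ≠ {x', y'} → Disjoint (Fij M x y) (Fij M x' y')) ∧
  (⋃ x ∈ b, ⋃ y ∈ b, ⋃ _ : x ≠ y, Fij M x y) = M.E \ b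

/-- The `b`-support of a set `S`. -/
def suppb (M : Matroid α) (b S : Set α) : Set α :=
  (b ∩ S) ∪ ⋃ x ∈ b, ⋃ y ∈ b, ⋃ _ : x ≠ y, ⋃ _ : (S ∩ Fij M x y).Nonempty, ({x, y} : Set α)

/-- Adjacency in the support graph `G_b(S)`: there is an edge between `x` and `y`
for each element of `S ∩ Fij M x y`. -/
def Adjb (M : Matroid α) (b S : Set α) (x y : α) : Prop :=
  x ∈ b ∧ y ∈ b ∧ x ≠ y ∧ (S ∩ Fij M x y).Nonempty

/-- The support graph `G_b(S)` is connected. -/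
def SuppConnected (M : Matroid α) (b S : Set α) : Prop :=
  ∀ x ∈ suppb M b S, ∀ y ∈ suppb M b S, Relation.ReflTransGen (Adjb M b S) x y

/-- The vertex set of the connected component of `x` in the support graph `G_b(S)`. -/
def compOf (M : Matroid α) (b S : Set α) (x : α) : Set α :=
  {y ∈ suppb M b S | Relation.ReflTransGen (Adjb M b S) x y}

/-- A matroid is simple if every pair of (not necessarily distinct) elements
of the ground set is independent. -/
def MSimple (M : Matroid α) : Prop := ∀ e ∈ M.E, ∀ f ∈ M.E, M.Indep {e, f}

/-- A circuit: a minimal dependent set. -/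
def MCircuit (M : Matroid α) (C : Set α) : Prop :=
  C ⊆ M.E ∧ ¬ M.Indep C ∧ ∀ x ∈ C, M.Indep (C \ {x})

/-- A matroid is connected if its ground set is nonempty and every two distinct
elements lie on a common circuit. -/
def MConnected (M : Matroid α) : Prop :=
  M.E.Nonempty ∧ ∀ e ∈ M.E, ∀ f ∈ M.E, e = f ∨ ∃ C, MCircuit M C ∧ e ∈ C ∧ f ∈ C

/-- The rank of a set in a matroid: the supremum of cardinalities of independent subsets. -/
noncomputable def mRank (M : Matroid α) (X : Set α) : ℕ :=
  sSup {n | ∃ I, M.Indep I ∧ I ⊆ X ∧ I.ncard = n}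

lemma step_lemma (M : Matroid α) (hsimple : MSimple M) (b F : Set α) (hF : M.IsFlat F)
    (hb : b ⊆ M.E) (z w : α) (hz : z ∈ F) (hzb : z ∈ b) (hzw : z ≠ w)
    (hne : (F ∩ Fij M z w).Nonempty) : w ∈ F := by
  obtain ⟨e, heF, hecl, henp⟩ := hne
  have heE : e ∈ M.E := M.closure_subset_ground _ hecl
  have hez : e ≠ z := fun h => henp (by simp [h])
  have hind : M.Indep {z, e} := hsimple z (hb hzb) e heE
  have hnot : e ∉ M.closure ({z} : Set α) := by
    have := Matroid.Indep.notMem_closure_diff_of_mem hind (e := e) (by simp)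
    simpa [show ({z, e} : Set α) \ {e} = {z} by ext x; simp; aesop] using this
  have hexch : w ∈ M.closure (insert e {z}) \ M.closure {z} :=
    Matroid.closure_exchange ⟨by rwa [Set.pair_comm] at hecl, hnot⟩
  have hwF : w ∈ M.closure F := M.closure_subset_closure (by
    rintro x hx; rcases hx with h | h
    · exact (by simpa using h) ▸ heF
    · simpa using (by simpa using h) ▸ hz) hexch.1
  rwa [hF.closure] at hwF

/-- For a simple matroid with a Cremona basis `b`, any flat `F` with
connected support graph satisfies `F ∩ b = supp_b(F)` or `F ∩ b = ∅`. -/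
theorem stmt0 (M : Matroid α) (hfin : M.E.Finite) (hsimple : MSimple M)
    (b : Set α) (hb : IsCremonaBasis M b)
    (F : Set α) (hF : M.IsFlat F) (hconn : SuppConnected M b F) :
    F ∩ b = suppb M b F ∨ F ∩ b = ∅ := by
  rcases Set.eq_empty_or_nonempty (F ∩ b) with h | ⟨x, hxF, hxb⟩
  · exact Or.inr h
  left
  apply Set.Subset.antisymm
  · rintro y ⟨hyF, hyb⟩
    exact Or.inl ⟨hyb, hyF⟩
  · intro y hy
    have hxsupp : x ∈ suppb M b F := Or.inl ⟨hxb, hxF⟩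
    have hpath := hconn x hxsupp y hy
    have hyb : y ∈ b := by
      rcases hy with h | h
      · exact h.1
      · simp only [Set.mem_iUnion] at h
        obtain ⟨u, hu, v, hv, _, _, h⟩ := h
        rcases h with h | h
        · exact h ▸ hu
        · exact (Set.mem_singleton_iff.mp h) ▸ hv
    have hyF : y ∈ F := by
      clear hy hyb
      induction hpath with
      | refl => exact hxF
      | tail _ hadj ih =>
        exact step_lemma M hsimple b F hF hb.1.subset_ground _ _ ih hadj.1 hadj.2.2.1
          hadj.2.2.2
    exact ⟨hyF, hyb⟩
end

section
/- Let M be a simple matroid with Cremona basis b, and let F be a flat of M with F ∩ b = ∅ whose support graph G_b(F) is connected. Then F contains at most binom(|supp_b(F)|, 2) elements. -/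
open Set

variable {α : Type*}

/-- A non-basis flat with connected support graph has at most
`binom(|supp_b(F)|, 2)` elements. -/
theorem stmt2 (M : Matroid α) (hfin : M.E.Finite) (hsimple : MSimple M)
    (b : Set α) (hb : IsCremonaBasis M b)
    (F : Set α) (hF : M.IsFlat F) (hFb : F ∩ b = ∅) (hconn : SuppConnected M b F) :
    F.ncard ≤ Nat.choose (suppb M b F).ncard 2 := by
  classical
  have hFE : F ⊆ M.E := hF.subset_ground
  have hbE : b ⊆ M.E := hb.1.subset_ground
  -- key lemma: at most one element of F on each line
  have key : ∀ x ∈ b, ∀ y ∈ b, x ≠ y → ∀ e ∈ F, ∀ e' ∈ F, e ≠ e' →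
      e ∈ Fij M x y → e' ∈ Fij M x y → False := by
    intro x hx y hy hxy e he e' he' hee' hef he'f
    have heE : e ∈ M.E := hFE he
    have he'E : e' ∈ M.E := hFE he'
    have hnb : ∀ z ∈ F, z ∉ b := fun z hz hzb ↦ by
      have : z ∈ F ∩ b := ⟨hz, hzb⟩
      simp [hFb] at this
    have hnotclo : ∀ a ∈ M.E, ∀ c ∈ M.E, a ≠ c → a ∉ M.closure {c} := by
      intro a ha c hc hac hmem
      have hcI : M.Indep {c} := by
        have := hsimple c hc c hc
        simpa using this
      rw [hcI.mem_closure_iff_of_notMem (by simpa using hac)] at hmem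
      exact hmem.not_indep (hsimple a ha c hc)
    -- e ∈ cl{x,y} \ cl{y}
    have hey : e ∈ M.closure (insert x {y}) \ M.closure {y} := by
      refine ⟨hef.1, ?_⟩
      exact hnotclo e heE y (hbE hy) (fun h ↦ hef.2 (by subst h; simp)) 
    have hx_cley : x ∈ M.closure (insert e {y}) :=
      (Matroid.closure_exchange hey).1
    have hsub1 : M.closure {x, y} ⊆ M.closure (insert e {y}) := by
      apply Matroid.closure_subset_closure_of_subset_closure
      rintro z (rfl | rfl)
      · exact hx_cley
      · exact M.mem_closure_of_mem' (by simp) (hbE hy)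
    have he'ey : e' ∈ M.closure (insert y {e}) := by
      have : e' ∈ M.closure (insert e {y}) := hsub1 he'f.1
      rwa [show (insert y {e} : Set α) = insert e {y} from Set.pair_comm y e]
    have he'ey' : e' ∈ M.closure (insert y {e}) \ M.closure {e} :=
      ⟨he'ey, hnotclo e' he'E e heE (Ne.symm hee')⟩
    have hy_cle : y ∈ M.closure (insert e' {e}) :=
      (Matroid.closure_exchange he'ey').1
    have hsub2 : M.closure (insert e {y}) ⊆ M.closure (insert e' {e}) := by
      apply Matroid.closure_subset_closure_of_subset_closure
      rintro z (rfl | rfl)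
      · exact M.mem_closure_of_mem' (by simp) heE
      · exact hy_cle
    have hx_clee' : x ∈ M.closure (insert e' {e}) := hsub2 hx_cley
    have hclF : M.closure (insert e' {e}) ⊆ F := by
      have : M.closure (insert e' {e}) ⊆ M.closure F :=
        M.closure_subset_closure (by
          rintro z (rfl | rfl) <;> assumption)
      rwa [hF.closure] at this
    exact hnb x (hclF hx_clee') hx
  -- every element of F is in some Fij
  have hexists : ∀ e ∈ F, ∃ x y, x ∈ b ∧ y ∈ b ∧ x ≠ y ∧ e ∈ Fij M x y := by
    intro e he
    have heEb : e ∈ M.E \ b := ⟨hFE he, fun hcon ↦ by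
      have : e ∈ F ∩ b := ⟨he, hcon⟩
      simp [hFb] at this⟩
    rw [← hb.2.2] at heEb
    simp only [Set.mem_iUnion] at heEb
    obtain ⟨x, hx, y, hy, hxy, hmem⟩ := heEb
    exact ⟨x, y, hx, hy, hxy, hmem⟩
  choose! xf yf hxf hyf hxyf hmemf using hexists
  -- supp is finite
  have hsuppb : suppb M b F ⊆ b := by
    intro z hz
    rcases hz with hz | hz
    · exact hz.1
    · simp only [Set.mem_iUnion] at hz
      obtain ⟨x, hx, y, hy, _, _, hz⟩ := hz
      rcases hz with rfl | rfl
      · exact hx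
      · exact hy
  have hsuppfin : (suppb M b F).Finite := hfin.subset (hsuppb.trans hbE)
  have hFfin : F.Finite := hfin.subset hFE
  -- the pair map
  set f : α → Finset α := fun e => {xf e, yf e} with hf
  have hpair : ∀ e ∈ F, (xf e) ∈ suppb M b F ∧ (yf e) ∈ suppb M b F := by
    intro e he
    have hne : (F ∩ Fij M (xf e) (yf e)).Nonempty := ⟨e, he, hmemf e he⟩
    constructor
    · right
      simp only [Set.mem_iUnion]
      exact ⟨xf e, hxf e he, yf e, hyf e he, hxyf e he, hne, by simp⟩
    · right
      simp only [Set.mem_iUnion]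
      exact ⟨xf e, hxf e he, yf e, hyf e he, hxyf e he, hne, by simp⟩
  have hmapsto : ∀ e ∈ F, f e ∈ hsuppfin.toFinset.powersetCard 2 := by
    intro e he
    rw [Finset.mem_powersetCard]
    constructor
    · intro z hz
      simp only [hf, Finset.mem_insert, Finset.mem_singleton] at hz
      rw [Set.Finite.mem_toFinset]
      rcases hz with rfl | rfl
      · exact (hpair e he).1
      · exact (hpair e he).2
    · simp only [hf]
      rw [Finset.card_insert_of_notMem (by simpa using hxyf e he)]
      simp
  have hinj : Set.InjOn f F := by
    intro e he e' he' hfe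
    by_contra hee'
    -- the two pairs are equal as sets
    have hseteq : ({xf e, yf e} : Set α) = {xf e', yf e'} := by
      have h1 : ∀ z, z ∈ (f e) ↔ z ∈ (f e') := fun z ↦ by rw [hfe]
      ext z
      have := h1 z
      simpa [hf] using this
    have hFijeq : Fij M (xf e) (yf e) = Fij M (xf e') (yf e') := by
      unfold Fij
      rw [hseteq]
    have hmem' : e' ∈ Fij M (xf e) (yf e) := by
      rw [hFijeq]; exact hmemf e' he'
    exact key (xf e) (hxf e he) (yf e) (hyf e he) (hxyf e he) e he e' he' hee'
      (hmemf e he) hmem'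
  calc F.ncard ≤ (hsuppfin.toFinset.powersetCard 2).card := by
        rw [show (hsuppfin.toFinset.powersetCard 2).card =
            ((hsuppfin.toFinset.powersetCard 2 : Finset (Finset α)) : Set (Finset α)).ncard by
          simp [Set.ncard_coe_finset]]
        exact Set.ncard_le_ncard_of_injOn f hmapsto hinj (Finset.finite_toSet _)
    _ = Nat.choose (suppb M b F).ncard 2 := by
        rw [Finset.card_powersetCard]
        congr 1
        rw [Set.ncard_eq_toFinset_card _ hsuppfin]
end

section
/- Let M be a simple matroid with Cremona basis b, and let F be a connected flat of M of rank 2 with F ∩ b = ∅. Then the support graph G_b(F) is a triangle: it has exactly 3 vertices and exactly 3 edges, one between each pair of vertices. -/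
open Set

variable {α : Type*}

section Aux

variable {M : Matroid α} {b F : Set α}


lemma fij_comm (M : Matroid α) (x y : α) : Fij M x y = Fij M y x := by
  unfold Fij; rw [Set.pair_comm]

lemma fij_congr {x y x' y' : α} (h : ({x, y} : Set α) = {x', y'}) :
    Fij M x y = Fij M x' y' := by unfold Fij; rw [h]

lemma not_mem_closure_single (hsimple : MSimple M) {g x : α} (hg : g ∈ M.E)
    (hx : x ∈ M.E) (hgx : g ≠ x) : g ∉ M.closure {x} := by
  have h := hsimple g hg x hx
  have h2 := h.notMem_closure_diff_of_mem (mem_insert g {x})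
  rwa [Set.insert_diff_self_of_notMem (by simpa using hgx)] at h2

lemma not_mem_closure_subsingleton (hsimple : MSimple M) {g : α} {S : Set α}
    (hS : S.Subsingleton) (hSE : S ⊆ M.E) (hg : g ∈ M.E) (hgS : g ∉ S) :
    g ∉ M.closure S := by
  rcases hS.eq_empty_or_singleton with rfl | ⟨x, rfl⟩
  · have hind : M.Indep {g} := by simpa using hsimple g hg g hg
    have h2 := hind.notMem_closure_diff_of_mem (mem_singleton g)
    simpa using h2
  · exact not_mem_closure_single hsimple hg (hSE rfl) (by simpa using hgS)

lemma line_eq (hsimple : MSimple M) (hF : M.IsFlat F) (hFfin : F.Finite)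
    (hrk : mRank M F = 2) {e f : α} (he : e ∈ F) (hf : f ∈ F) (hef : e ≠ f) :
    M.closure {e, f} = F := by
  have hFE := hF.subset_ground
  have hind : M.Indep {e, f} := hsimple e (hFE he) f (hFE hf)
  refine subset_antisymm ?_ ?_
  · rw [← hF.closure]
    exact M.closure_subset_closure (insert_subset he (singleton_subset_iff.2 hf))
  intro g hg
  by_contra hgcl
  have hgE : g ∈ M.E := hFE hg
  have hge : g ∉ ({e, f} : Set α) := fun h => hgcl (M.subset_closure {e, f}
    (insert_subset (hFE he) (singleton_subset_iff.2 (hFE hf))) h)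
  have hind3 : M.Indep (insert g {e, f}) := by
    rw [hind.insert_indep_iff]; exact Or.inl ⟨hgE, hgcl⟩
  have h3 : (insert g ({e, f} : Set α)).ncard = 3 := by
    rw [Set.ncard_insert_of_notMem hge ((Set.finite_singleton f).insert e),
      Set.ncard_pair hef]
  have hbdd : BddAbove {n | ∃ I, M.Indep I ∧ I ⊆ F ∧ I.ncard = n} :=
    ⟨F.ncard, fun n ⟨I, _, hIF, hI⟩ => hI ▸ Set.ncard_le_ncard hIF hFfin⟩
  have hle : 3 ≤ mRank M F :=
    le_csSup hbdd ⟨insert g {e, f}, hind3,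
      insert_subset hg (insert_subset he (singleton_subset_iff.2 hf)), h3⟩
  omega

lemma pair_eq_of_subset {a c d e' : α} (hab : a ≠ c) (h : ({a, c} : Set α) ⊆ {d, e'}) :
    ({a, c} : Set α) = {d, e'} := by
  have ha : a = d ∨ a = e' := by simpa using h (mem_insert a _)
  have hc : c = d ∨ c = e' := by simpa using h (by simp)
  rcases ha with rfl | rfl <;> rcases hc with rfl | rfl
  · exact absurd rfl hab
  · rfl
  · exact Set.pair_comm _ _
  · exact absurd rfl hab

lemma orient {x y u : α} (hxy : x ≠ y) (hu : u ∈ ({x, y} : Set α)) :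
    ∃ v, u ≠ v ∧ ({x, y} : Set α) = {u, v} := by
  rcases hu with rfl | hu
  · exact ⟨y, hxy, rfl⟩
  · rw [mem_singleton_iff] at hu; subst hu
    exact ⟨x, hxy.symm, Set.pair_comm _ _⟩

lemma third_pair {u v w p q : α} (hpq : p ≠ q)
    (hp : p ∈ ({u, v, w} : Set α)) (hq : q ∈ ({u, v, w} : Set α))
    (h1 : ({p, q} : Set α) ≠ {u, v}) (h2 : ({p, q} : Set α) ≠ {u, w}) :
    ({p, q} : Set α) = {v, w} := by
  simp only [mem_insert_iff, mem_singleton_iff] at hp hq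
  rcases hp with rfl | rfl | rfl <;> rcases hq with rfl | rfl | rfl <;>
    first
      | exact absurd rfl hpq
      | rfl
      | exact absurd rfl h1
      | exact absurd rfl h2
      | exact absurd (Set.pair_comm _ _) h1
      | exact absurd (Set.pair_comm _ _) h2
      | exact Set.pair_comm _ _

lemma atMostOne (hsimple : MSimple M) (hF : M.IsFlat F) (hFfin : F.Finite)
    (hrk : mRank M F = 2) (hFb : F ∩ b = ∅) (hbE : b ⊆ M.E)
    {x y : α} (hx : x ∈ b) (hy : y ∈ b) :
    (F ∩ Fij M x y).Subsingleton := by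
  have hFE := hF.subset_ground
  have hnb : ∀ z ∈ F, z ∉ b := fun z hz hzb =>
    (Set.eq_empty_iff_forall_notMem.mp hFb z) ⟨hz, hzb⟩
  intro e ⟨heF, hecl, _⟩ f ⟨hfF, hfcl, _⟩
  by_contra hne
  have heE := hFE heF; have hfE := hFE hfF
  have hxE := hbE hx; have hyE := hbE hy
  have hey : e ≠ y := fun h => hnb e heF (h ▸ hy)
  by_cases hxy : x = y
  · subst hxy
    exact not_mem_closure_single hsimple heE hxE hey (by simpa using hecl)
  -- exchange x with e
  have heny : e ∉ M.closure {y} := not_mem_closure_single hsimple heE hyE hey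
  have hx' : x ∈ M.closure (insert e {y}) :=
    (Matroid.closure_exchange ⟨hecl, heny⟩).1
  have hfey : f ∈ M.closure ({e, y} : Set α) := by
    refine M.closure_subset_closure_of_subset_closure ?_ hfcl
    exact insert_subset hx' (singleton_subset_iff.2
      (M.subset_closure {e, y} (insert_subset heE (singleton_subset_iff.2 hyE)) (by simp)))
  have hfne : f ∉ M.closure {e} :=
    not_mem_closure_single hsimple hfE heE (Ne.symm hne)
  have hy' : y ∈ M.closure (insert f {e}) := by
    refine (Matroid.closure_exchange ⟨?_, hfne⟩).1
    rwa [Set.pair_comm] at hfey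
  have hyF : y ∈ F := by
    rw [show (insert f {e} : Set α) = {e, f} from Set.pair_comm f e,
      line_eq hsimple hF hFfin hrk heF hfF hne] at hy'
    exact hy'
  exact hnb y hyF hy

lemma keyA (hsimple : MSimple M) (hF : M.IsFlat F) (hFfin : F.Finite)
    (hrk : mRank M F = 2) (hFb : F ∩ b = ∅) (hbi : M.Indep b)
    {e f g p q r s t w : α} (he : e ∈ F) (hf : f ∈ F) (hef : e ≠ f) (hg : g ∈ F)
    (hp : p ∈ b) (hq : q ∈ b) (hr : r ∈ b) (hs : s ∈ b) (ht : t ∈ b) (hw : w ∈ b)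
    (hfe : e ∈ Fij M p q) (hff : f ∈ Fij M r s) (hfg : g ∈ Fij M t w) :
    ({t, w} : Set α) ⊆ {p, q, r, s} := by
  have hbE := hbi.subset_ground
  have hnb : ∀ z ∈ F, z ∉ b := fun z hz hzb =>
    (Set.eq_empty_iff_forall_notMem.mp hFb z) ⟨hz, hzb⟩
  have hTb : ({p, q, r, s} : Set α) ⊆ b := by
    intro z hz; simp only [mem_insert_iff, mem_singleton_iff] at hz
    rcases hz with rfl | rfl | rfl | rfl <;> assumption
  have htwb : ({t, w} : Set α) ⊆ b :=
    insert_subset ht (singleton_subset_iff.2 hw)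
  have hU : M.Indep (({p, q, r, s} : Set α) ∪ {t, w}) :=
    hbi.subset (union_subset hTb htwb)
  have hginT : g ∈ M.closure ({p, q, r, s} : Set α) := by
    have hgF : g ∈ M.closure ({e, f} : Set α) := by
      rw [line_eq hsimple hF hFfin hrk he hf hef]; exact hg
    refine M.closure_subset_closure_of_subset_closure ?_ hgF
    refine insert_subset ?_ (singleton_subset_iff.2 ?_)
    · exact M.closure_subset_closure (show ({p, q} : Set α) ⊆ {p, q, r, s} by
        intro z hz; simp only [mem_insert_iff, mem_singleton_iff] at hz ⊢; tauto) hfe.1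
    · exact M.closure_subset_closure (show ({r, s} : Set α) ⊆ {p, q, r, s} by
        intro z hz; simp only [mem_insert_iff, mem_singleton_iff] at hz ⊢; tauto) hff.1
  have hgint : g ∈ M.closure (({p, q, r, s} : Set α) ∩ {t, w}) := by
    rw [hU.closure_inter_eq_inter_closure]; exact ⟨hginT, hfg.1⟩
  by_contra hns
  have hsub : (({p, q, r, s} : Set α) ∩ {t, w}).Subsingleton := by
    rw [Set.not_subset] at hns
    obtain ⟨z, hz1, hz2⟩ := hns
    rcases hz1 with rfl | hz1
    · intro a ⟨ha1, ha2⟩ c ⟨hc1, hc2⟩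
      have ha : a = w := by rcases ha2 with rfl | ha2; exact absurd ha1 hz2; simpa using ha2
      have hc : c = w := by rcases hc2 with rfl | hc2; exact absurd hc1 hz2; simpa using hc2
      rw [ha, hc]
    · rw [mem_singleton_iff] at hz1; subst hz1
      intro a ⟨ha1, ha2⟩ c ⟨hc1, hc2⟩
      have ha : a = t := by rcases ha2 with rfl | ha2; rfl; rw [mem_singleton_iff] at ha2; exact absurd (ha2 ▸ ha1) hz2
      have hc : c = t := by rcases hc2 with rfl | hc2; rfl; rw [mem_singleton_iff] at hc2; exact absurd (hc2 ▸ hc1) hz2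
      rw [ha, hc]
  refine not_mem_closure_subsingleton hsimple hsub
    ((inter_subset_right).trans (htwb.trans hbE)) (hF.subset_ground hg) ?_ hgint
  exact fun hgm => hnb g hg (htwb hgm.2)

end Aux

/-- A connected rank-2 non-basis flat has support graph a triangle:
exactly 3 vertices, and exactly one edge between each pair of vertices. -/

theorem stmt3 (M : Matroid α) (hfin : M.E.Finite) (hsimple : MSimple M)
    (b : Set α) (hb : IsCremonaBasis M b)
    (F : Set α) (hF : M.IsFlat F) (hFconn : MConnected (M.restrict F))
    (hrk : mRank M F = 2) (hFb : F ∩ b = ∅) :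
    (suppb M b F).ncard = 3 ∧
      ∀ x ∈ suppb M b F, ∀ y ∈ suppb M b F, x ≠ y → ∃! e, e ∈ F ∩ Fij M x y := by
  obtain ⟨hbase, hdisj, hunion⟩ := hb
  have hbi : M.Indep b := hbase.indep
  have hbE : b ⊆ M.E := hbase.subset_ground
  have hFE : F ⊆ M.E := hF.subset_ground
  have hFfin : F.Finite := hfin.subset hFE
  have hnb : ∀ z ∈ F, z ∉ b := fun z hz hzb =>
    (Set.eq_empty_iff_forall_notMem.mp hFb z) ⟨hz, hzb⟩
  -- every element of F lies in some Fij
  have hpair : ∀ e ∈ F, ∃ x, x ∈ b ∧ ∃ y, y ∈ b ∧ x ≠ y ∧ e ∈ Fij M x y := by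
    intro e he
    have heU : e ∈ ⋃ x ∈ b, ⋃ y ∈ b, ⋃ _ : x ≠ y, Fij M x y := by
      rw [hunion]; exact ⟨hFE he, hnb e he⟩
    simp only [mem_iUnion] at heU
    obtain ⟨x, hx, y, hy, hxy, hf⟩ := heU
    exact ⟨x, hx, y, hy, hxy, hf⟩
  have huniq : ∀ x y x' y', x ∈ b → y ∈ b → x' ∈ b → y' ∈ b → x ≠ y → x' ≠ y' →
      ∀ e, e ∈ Fij M x y → e ∈ Fij M x' y' → ({x, y} : Set α) = {x', y'} := by
    intro x y x' y' hx hy hx' hy' hxy hx'y' e h1 h2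
    by_contra hne
    exact Set.disjoint_left.mp (hdisj x hx y hy x' hx' y' hy' hxy hx'y' hne) h1 h2
  -- three distinct elements of F
  have hbdd : BddAbove {n | ∃ I, M.Indep I ∧ I ⊆ F ∧ I.ncard = n} :=
    ⟨F.ncard, fun n ⟨I, _, hIF, hI⟩ => hI ▸ Set.ncard_le_ncard hIF hFfin⟩
  have h2mem : ∃ I, M.Indep I ∧ I ⊆ F ∧ I.ncard = 2 := by
    have h := Nat.sSup_mem (s := {n | ∃ I, M.Indep I ∧ I ⊆ F ∧ I.ncard = n})
      ⟨0, ⟨∅, M.empty_indep, empty_subset _, by simp⟩⟩ hbdd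
    rwa [show sSup {n | ∃ I, M.Indep I ∧ I ⊆ F ∧ I.ncard = n} = mRank M F from rfl,
      hrk] at h
  obtain ⟨I, hIind, hIF, hI2⟩ := h2mem
  obtain ⟨a, c, hac, rfl⟩ := Set.ncard_eq_two.1 hI2
  have haF : a ∈ F := hIF (by simp)
  have hcF : c ∈ F := hIF (by simp)
  obtain ⟨-, hconn⟩ := hFconn
  have hconn' := hconn a (by simpa using haF) c (by simpa using hcF)
  rcases hconn' with rfl | ⟨C, ⟨hCsub, hCdep, -⟩, haC, hcC⟩
  · exact absurd rfl hac
  rw [Matroid.restrict_ground_eq] at hCsub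
  have hgex : ∃ g ∈ C, g ∉ ({a, c} : Set α) := by
    by_contra h; push_neg at h
    exact hCdep ((Matroid.restrict_indep_iff).2 ⟨hIind.subset h, hCsub⟩)
  obtain ⟨g, hgC, hgac⟩ := hgex
  have hgF : g ∈ F := hCsub hgC
  have hga : g ≠ a := fun h => hgac (by simp [h])
  have hgc : g ≠ c := fun h => hgac (by simp [h])
  -- pairs
  obtain ⟨x1, hx1, y1, hy1, hxy1, hf1⟩ := hpair a haF
  obtain ⟨x2, hx2, y2, hy2, hxy2, hf2⟩ := hpair c hcF
  obtain ⟨x3, hx3, y3, hy3, hxy3, hf3⟩ := hpair g hgF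
  have hAMO : ∀ {x y : α}, x ∈ b → y ∈ b → (F ∩ Fij M x y).Subsingleton :=
    fun hx hy => atMostOne hsimple hF hFfin hrk hFb hbE hx hy
  have hP12 : ({x1, y1} : Set α) ≠ {x2, y2} := by
    intro h
    exact hac (hAMO hx1 hy1 ⟨haF, hf1⟩ ⟨hcF, (fij_congr h) ▸ hf2⟩)
  have hP13 : ({x1, y1} : Set α) ≠ {x3, y3} := by
    intro h
    exact hga.symm (hAMO hx1 hy1 ⟨haF, hf1⟩ ⟨hgF, (fij_congr h) ▸ hf3⟩)
  have hP23 : ({x2, y2} : Set α) ≠ {x3, y3} := by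
    intro h
    exact hgc.symm (hAMO hx2 hy2 ⟨hcF, hf2⟩ ⟨hgF, (fij_congr h) ▸ hf3⟩)
  -- P1 and P2 meet
  have hmeet : ∃ u, u ∈ ({x1, y1} : Set α) ∧ u ∈ ({x2, y2} : Set α) := by
    by_contra h; push_neg at h
    have hsub : ({x1, y1} : Set α) ⊆ {x2, y2, x3, y3} :=
      keyA hsimple hF hFfin hrk hFb hbi hcF hgF (Ne.symm hgc) haF
        hx2 hy2 hx3 hy3 hx1 hy1 hf2 hf3 hf1
    have hsub' : ({x1, y1} : Set α) ⊆ {x3, y3} := by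
      intro z hz
      have hz4 := hsub hz
      have hz2 := h z hz
      simp only [mem_insert_iff, mem_singleton_iff] at hz4 hz2 ⊢
      tauto
    exact hP13 (pair_eq_of_subset hxy1 hsub')
  obtain ⟨u, hu1, hu2⟩ := hmeet
  obtain ⟨v, huv, hP1⟩ := orient hxy1 hu1
  obtain ⟨w, huw, hP2⟩ := orient hxy2 hu2
  have hvw : v ≠ w := fun h => hP12 (by rw [hP1, hP2, h])
  have huvb : ({u, v} : Set α) ⊆ b := hP1 ▸ (insert_subset hx1 (by simpa using hy1))
  have huwb : ({u, w} : Set α) ⊆ b := hP2 ▸ (insert_subset hx2 (by simpa using hy2))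
  have hub : u ∈ b := huvb (by simp)
  have hvb : v ∈ b := huvb (by simp)
  have hwb : w ∈ b := huwb (by simp)
  -- every pair is inside {u,v,w}
  have h14 : ({x1, y1, x2, y2} : Set α) ⊆ ({u, v, w} : Set α) := by
    have hs1 : ({x1, y1} : Set α) ⊆ {u, v, w} := by
      rw [hP1]; intro z hz
      simp only [mem_insert_iff, mem_singleton_iff] at hz ⊢; tauto
    have hs2 : ({x2, y2} : Set α) ⊆ {u, v, w} := by
      rw [hP2]; intro z hz
      simp only [mem_insert_iff, mem_singleton_iff] at hz ⊢; tauto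
    intro z hz
    simp only [mem_insert_iff, mem_singleton_iff] at hz
    rcases hz with rfl | rfl | rfl | rfl
    · exact hs1 (by simp)
    · exact hs1 (by simp)
    · exact hs2 (by simp)
    · exact hs2 (by simp)
  have hsub3 : ({x3, y3} : Set α) ⊆ {u, v, w} :=
    (keyA hsimple hF hFfin hrk hFb hbi haF hcF hac hgF
      hx1 hy1 hx2 hy2 hx3 hy3 hf1 hf2 hf3).trans h14
  have hP3 : ({x3, y3} : Set α) = {v, w} :=
    third_pair hxy3 (hsub3 (by simp)) (hsub3 (by simp))
      (fun h => hP13 (hP1.trans h.symm)) (fun h => hP23 (hP2.trans h.symm))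
  -- every pair arising from F is within {u,v,w}
  have hallpairs : ∀ x y, x ∈ b → y ∈ b → x ≠ y → ∀ e, e ∈ F → e ∈ Fij M x y →
      ({x, y} : Set α) ⊆ {u, v, w} := by
    intro x y hx hy hxy e heF hef
    by_cases hea : e = a
    · subst hea
      rw [huniq x y x1 y1 hx hy hx1 hy1 hxy hxy1 e hef hf1, hP1]
      intro z hz; simp only [mem_insert_iff, mem_singleton_iff] at hz ⊢; tauto
    by_cases hec : e = c
    · subst hec
      rw [huniq x y x2 y2 hx hy hx2 hy2 hxy hxy2 e hef hf2, hP2]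
      intro z hz; simp only [mem_insert_iff, mem_singleton_iff] at hz ⊢; tauto
    · exact (keyA hsimple hF hFfin hrk hFb hbi haF hcF hac heF
        hx1 hy1 hx2 hy2 hx hy hf1 hf2 hef).trans h14
  -- suppb = {u,v,w}
  have hsupp : suppb M b F = ({u, v, w} : Set α) := by
    apply subset_antisymm
    · intro z hz
      simp only [suppb, mem_union, mem_iUnion] at hz
      rcases hz with hz | hz
      · exact absurd ⟨hz.2, hz.1⟩ ((Set.eq_empty_iff_forall_notMem.mp hFb) z)
      · obtain ⟨x, hx, y, hy, hxy, ⟨e, heF, hefij⟩, hzxy⟩ := hz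
        exact hallpairs x y hx hy hxy e heF hefij hzxy
    · intro z hz
      have ha' : a ∈ Fij M u v := (fij_congr hP1) ▸ hf1
      have hc' : c ∈ Fij M u w := (fij_congr hP2) ▸ hf2
      simp only [suppb, mem_union, mem_iUnion]
      simp only [mem_insert_iff, mem_singleton_iff] at hz
      rcases hz with rfl | rfl | rfl
      · exact Or.inr ⟨z, hub, v, hvb, huv, ⟨a, haF, ha'⟩, by simp⟩
      · exact Or.inr ⟨u, hub, z, hvb, huv, ⟨a, haF, ha'⟩, by simp⟩
      · exact Or.inr ⟨u, hub, z, hwb, huw, ⟨c, hcF, hc'⟩, by simp⟩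
  -- edges
  have hedge_uv : ∃! e, e ∈ F ∩ Fij M u v :=
    ⟨a, ⟨haF, (fij_congr hP1) ▸ hf1⟩,
      fun z hz => hAMO hub hvb hz ⟨haF, (fij_congr hP1) ▸ hf1⟩⟩
  have hedge_uw : ∃! e, e ∈ F ∩ Fij M u w :=
    ⟨c, ⟨hcF, (fij_congr hP2) ▸ hf2⟩,
      fun z hz => hAMO hub hwb hz ⟨hcF, (fij_congr hP2) ▸ hf2⟩⟩
  have hedge_vw : ∃! e, e ∈ F ∩ Fij M v w :=
    ⟨g, ⟨hgF, (fij_congr hP3) ▸ hf3⟩,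
      fun z hz => hAMO hvb hwb hz ⟨hgF, (fij_congr hP3) ▸ hf3⟩⟩
  constructor
  · rw [hsupp, Set.ncard_insert_of_notMem (by simp [huv, huw])
      ((Set.finite_singleton w).insert v), Set.ncard_pair hvw]
  · intro x hx y hy hxy
    rw [hsupp] at hx hy
    simp only [mem_insert_iff, mem_singleton_iff] at hx hy
    rcases hx with rfl | rfl | rfl <;> rcases hy with rfl | rfl | rfl <;>
      first
        | exact absurd rfl hxy
        | exact hedge_uv
        | exact hedge_uw
        | exact hedge_vw
        | (rw [fij_comm]; first | exact hedge_uv | exact hedge_uw | exact hedge_vw)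
end

section
/- Let M be a simple matroid with Cremona basis b, and let F be a nonempty flat with F ∩ b = ∅ and connected support graph G_b(F). Then the rank of F equals |supp_b(F)| − 1. -/
open Set

variable {α : Type*}

section Aux

lemma crossing {r : α → α → Prop} {R : Set α} {a : α} (ha : a ∈ R) :
    ∀ {c}, Relation.ReflTransGen r a c → c ∉ R → ∃ u v, u ∈ R ∧ v ∉ R ∧ r u v := by
  intro c h
  induction h with
  | refl => exact fun hc => absurd ha hc
  | @tail b c hab hbc ih =>
    intro hc
    by_cases hbR : b ∈ R
    · exact ⟨b, c, hbR, hc, hbc⟩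
    · exact ih hbR

lemma indep_encard_le_of_subset_closure {M : Matroid α} {I S : Set α}
    (hI : M.Indep I) (hS : M.Indep S) (hsub : I ⊆ M.closure S) :
    I.encard ≤ S.encard := by
  obtain ⟨J, hJ, hIJ⟩ := hI.subset_isBasis_of_subset hsub (M.closure_subset_ground S)
  calc I.encard ≤ J.encard := encard_mono hIJ
    _ = S.encard := hJ.encard_eq_encard hS.isBasis_closure

lemma mem_suppb_of_edge {M : Matroid α} {b F : Set α} {x y : α}
    (hx : x ∈ b) (hy : y ∈ b) (hxy : x ≠ y) (hne : (F ∩ Fij M x y).Nonempty) :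
    x ∈ suppb M b F ∧ y ∈ suppb M b F := by
  constructor <;>
  · refine Or.inr ?_
    simp only [mem_iUnion]
    exact ⟨x, hx, y, hy, hxy, hne, by simp⟩

lemma suppb_subset {M : Matroid α} {b F : Set α} (hFb : F ∩ b = ∅) :
    suppb M b F ⊆ b := by
  intro z hz
  rcases hz with hz | hz
  · exact hz.1
  · simp only [mem_iUnion] at hz
    obtain ⟨x, hx, y, hy, -, -, hz⟩ := hz
    rcases hz with rfl | rfl
    · exact hx
    · exact hy

/-- Every element of `F` lies on some line of the Cremona basis. -/
lemma exists_edge {M : Matroid α} {b F : Set α} (hb : IsCremonaBasis M b)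
    (hFE : F ⊆ M.E) (hFb : F ∩ b = ∅) {f : α} (hf : f ∈ F) :
    ∃ x y, x ∈ b ∧ y ∈ b ∧ x ≠ y ∧ f ∈ Fij M x y := by
  have hfb : f ∉ b := fun h => by
    have : f ∈ F ∩ b := ⟨hf, h⟩
    simp [hFb] at this
  have : f ∈ M.E \ b := ⟨hFE hf, hfb⟩
  rw [← hb.2.2] at this
  simp only [mem_iUnion] at this
  obtain ⟨x, hx, y, hy, hxy, hfij⟩ := this
  exact ⟨x, y, hx, hy, hxy, hfij⟩

end Aux

lemma build {M : Matroid α} {b F : Set α} (hfin : M.E.Finite) (hsimple : MSimple M)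
    (hbase : M.IsBase b) (hFE : F ⊆ M.E) (hFb : F ∩ b = ∅)
    (hconn : SuppConnected M b F) {x0 : α} (hx0 : x0 ∈ suppb M b F) :
    ∀ n (R I : Set α), R ⊆ suppb M b F → x0 ∈ R → I ⊆ F →
      M.Indep (insert x0 I) → I.Finite → x0 ∉ I →
      R ⊆ M.closure (insert x0 I) → insert x0 I ⊆ M.closure R →
      I.ncard + 1 = R.ncard → (suppb M b F \ R).ncard = n →
      ∃ I', I' ⊆ F ∧ M.Indep I' ∧ I'.ncard + 1 = (suppb M b F).ncard := by
  have hSb : suppb M b F ⊆ b := suppb_subset hFb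
  have hSfin : (suppb M b F).Finite := hfin.subset (hSb.trans hbase.subset_ground)
  set S := suppb M b F with hS
  intro n
  induction n with
  | zero =>
    intro R I hRS hx0R hIF hJind hIfin hx0I hRcl hJcl hcard hdiff
    have hempty : S \ R = ∅ := (ncard_eq_zero (hSfin.diff (t := R))).mp hdiff
    have hRS' : R = S := subset_antisymm hRS (diff_eq_empty.mp hempty)
    exact ⟨I, hIF, hJind.subset (subset_insert _ _), by rw [hcard, hRS']⟩
  | succ n ih =>
    intro R I hRS hx0R hIF hJind hIfin hx0I hRcl hJcl hcard hdiff
    have hRfin : R.Finite := hSfin.subset hRS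
    have hSRne : (S \ R).Nonempty := by
      rw [nonempty_iff_ne_empty]; intro h; rw [h] at hdiff; simp at hdiff
    obtain ⟨v0, hv0⟩ := hSRne
    obtain ⟨u, v, huR, hvR, hub, hvb, huv, f, hfF, hfij⟩ :=
      crossing hx0R (hconn x0 hx0 v0 hv0.1) hv0.2
    have hvS : v ∈ S := (mem_suppb_of_edge hub hvb huv ⟨f, hfF, hfij⟩).2
    have hvE : v ∈ M.E := hbase.subset_ground hvb
    have huE : u ∈ M.E := hbase.subset_ground hub
    have hfE : f ∈ M.E := hFE hfF
    set J := insert x0 I with hJ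
    have hJE : J ⊆ M.E := hJind.subset_ground
    have hfuv : f ∈ M.closure {u, v} := hfij.1
    have hfu : f ≠ u := fun h => hfij.2 (by simp [h])
    have hvR' : v ∉ M.closure R := by
      have hind : M.Indep (insert v R) :=
        hbase.indep.subset (insert_subset hvb (hRS.trans hSb))
      have h := hind.notMem_closure_diff_of_mem (mem_insert v R)
      rwa [insert_diff_self_of_notMem hvR] at h
    have hclJR : M.closure J ⊆ M.closure R :=
      M.closure_subset_closure_of_subset_closure hJcl
    have hvclJ : v ∉ M.closure J := fun h => hvR' (hclJR h)
    have huclJ : u ∈ M.closure J := hRcl huR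
    have hfclJ : f ∉ M.closure J := by
      intro hf
      have h1 : f ∉ M.closure {u} := by
        have hpair : M.Indep {f, u} := hsimple f hfE u huE
        have h := hpair.notMem_closure_diff_of_mem (mem_insert f {u})
        rwa [pair_diff_left hfu] at h
      have h2 : f ∈ M.closure (insert v {u}) \ M.closure {u} := by
        refine ⟨?_, h1⟩
        rwa [show insert v {u} = ({u, v} : Set α) from pair_comm v u]
      have h3 := Matroid.closure_exchange h2
      have h4 : insert f {u} ⊆ M.closure J :=
        insert_subset hf (singleton_subset_iff.mpr huclJ)
      exact hvclJ ((M.closure_subset_closure_of_subset_closure h4) h3.1)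
    have hfJ : f ∉ J := fun h => hfclJ (M.subset_closure J hJE h)
    have hJfind : M.Indep (insert f J) :=
      (hJind.insert_indep_iff_of_notMem hfJ).mpr ⟨hfE, hfclJ⟩
    have hvclfJ : v ∈ M.closure (insert f J) := by
      have h2 : f ∈ M.closure (insert v J) \ M.closure J := by
        refine ⟨?_, hfclJ⟩
        have huvsub : ({u, v} : Set α) ⊆ M.closure (insert v J) := by
          refine insert_subset ?_ (singleton_subset_iff.mpr ?_)
          · exact M.closure_subset_closure (subset_insert v J) huclJ
          · exact M.subset_closure _ (insert_subset hvE hJE) (mem_insert v J)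
        exact (M.closure_subset_closure_of_subset_closure huvsub) hfuv
      exact (Matroid.closure_exchange h2).1
    have e : insert x0 (insert f I) = insert f J := by rw [hJ, insert_comm]
    refine ih (insert v R) (insert f I) ?_ ?_ ?_ ?_ ?_ ?_ ?_ ?_ ?_ ?_
    · exact insert_subset hvS hRS
    · exact mem_insert_of_mem _ hx0R
    · exact insert_subset hfF hIF
    · rw [e]; exact hJfind
    · exact hIfin.insert f
    · intro h
      rcases h with h | h
      · exact hfJ (by rw [← h]; exact mem_insert x0 I)
      · exact hx0I h
    · rw [e]
      exact insert_subset hvclfJ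
        (hRcl.trans (M.closure_subset_closure (subset_insert f J)))
    · rw [e]
      refine insert_subset ?_ (hJcl.trans (M.closure_subset_closure (subset_insert v R)))
      have huvsub : ({u, v} : Set α) ⊆ insert v R :=
        insert_subset (mem_insert_of_mem _ huR) (singleton_subset_iff.mpr (mem_insert v R))
      exact M.closure_subset_closure huvsub hfuv
    · have hfI : f ∉ I := fun h => hfJ (mem_insert_of_mem _ h)
      rw [ncard_insert_of_notMem hfI hIfin, ncard_insert_of_notMem hvR hRfin]
      omega
    · have e2 : S \ insert v R = (S \ R) \ {v} := by
        ext x; simp only [mem_diff, mem_insert_iff, mem_singleton_iff]; tauto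
      rw [e2]
      have hvSR : v ∈ S \ R := ⟨hvS, hvR⟩
      have h5 := ncard_diff_singleton_add_one hvSR (hSfin.diff (t := R))
      omega

/-- A nonempty non-basis flat with connected support graph has rank
`|supp_b(F)| - 1`. -/
theorem stmt4 (M : Matroid α) (hfin : M.E.Finite) (hsimple : MSimple M)
    (b : Set α) (hb : IsCremonaBasis M b)
    (F : Set α) (hF : M.IsFlat F) (hne : F.Nonempty) (hFb : F ∩ b = ∅)
    (hconn : SuppConnected M b F) :
    mRank M F = (suppb M b F).ncard - 1 := by
  have hFE : F ⊆ M.E := hF.subset_ground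
  have hbase := hb.1
  set S := suppb M b F with hS
  have hSb : S ⊆ b := suppb_subset hFb
  have hSE : S ⊆ M.E := hSb.trans hbase.subset_ground
  have hSfin : S.Finite := hfin.subset hSE
  have hSind : M.Indep S := hbase.indep.subset hSb
  have hFclS : F ⊆ M.closure S := by
    intro f hf
    obtain ⟨x, y, hx, hy, hxy, hfij⟩ := exists_edge hb hFE hFb hf
    obtain ⟨h1, h2⟩ := mem_suppb_of_edge hx hy hxy ⟨f, hf, hfij⟩
    exact M.closure_subset_closure (insert_subset h1 (singleton_subset_iff.mpr h2)) hfij.1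
  obtain ⟨f0, hf0⟩ := hne
  obtain ⟨x0, y0, hx0b, hy0b, hxy0, hfij0⟩ := exists_edge hb hFE hFb hf0
  have hx0S : x0 ∈ S := (mem_suppb_of_edge hx0b hy0b hxy0 ⟨f0, hf0, hfij0⟩).1
  have hx0F : x0 ∉ F := by
    intro h
    have h2 : x0 ∈ F ∩ b := ⟨h, hSb hx0S⟩
    rw [hFb] at h2; exact h2
  -- upper bound
  have hub : ∀ I, M.Indep I → I ⊆ F → I.ncard + 1 ≤ S.ncard := by
    intro I hI hIF
    have hIfin : I.Finite := hfin.subset hI.subset_ground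
    have hx0I : x0 ∉ I := fun h => hx0F (hIF h)
    have hx0clI : x0 ∉ M.closure I := fun h =>
      hx0F (by rw [← hF.closure]; exact M.closure_subset_closure hIF h)
    have hind : M.Indep (insert x0 I) :=
      (hI.insert_indep_iff_of_notMem hx0I).mpr ⟨hSE hx0S, hx0clI⟩
    have hsub : insert x0 I ⊆ M.closure S :=
      insert_subset (M.subset_closure S hSE hx0S) (hIF.trans hFclS)
    have hcard := indep_encard_le_of_subset_closure hind hSind hsub
    have h2 : (insert x0 I).ncard ≤ S.ncard := by
      rw [ncard_def, ncard_def]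
      exact ENat.toNat_le_toNat hcard hSfin.encard_lt_top.ne
    rw [ncard_insert_of_notMem hx0I hIfin] at h2
    exact h2
  -- lower bound : build an independent subset of size S.ncard - 1
  have hx0ind : M.Indep (insert x0 (∅ : Set α)) := by
    rw [insert_empty_eq]
    exact hSind.subset (singleton_subset_iff.mpr hx0S)
  have hx0E : ({x0} : Set α) ⊆ M.E := singleton_subset_iff.mpr (hSE hx0S)
  obtain ⟨I', hI'F, hI'ind, hI'card⟩ :=
    build hfin hsimple hbase hFE hFb hconn hx0S ((S \ {x0}).ncard) {x0} ∅
      (singleton_subset_iff.mpr hx0S) rfl (empty_subset F) hx0ind finite_empty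
      (notMem_empty x0)
      (by rw [insert_empty_eq]; exact M.subset_closure {x0} hx0E)
      (by rw [insert_empty_eq]; exact M.subset_closure {x0} hx0E)
      (by simp) rfl
  have hmem : S.ncard - 1 ∈ {n | ∃ I, M.Indep I ∧ I ⊆ F ∧ I.ncard = n} :=
    ⟨I', hI'ind, hI'F, by rw [hS]; omega⟩
  have hbdd : ∀ m ∈ {n | ∃ I, M.Indep I ∧ I ⊆ F ∧ I.ncard = n}, m ≤ S.ncard - 1 := by
    rintro m ⟨I, hI, hIF, rfl⟩
    have := hub I hI hIF
    omega
  rw [mRank]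
  exact le_antisymm (csSup_le ⟨_, hmem⟩ hbdd) (le_csSup ⟨_, fun _ h => hbdd _ h⟩ hmem)
end

section
/- Let M be a simple matroid with Cremona basis b. Every basis flat F (i.e., a nonempty flat with connected support graph and F ∩ b = supp_b(F)) satisfies r(F) = |F ∩ b|. -/
open Set

variable {α : Type*}

/-- A basis flat `F` (nonempty, connected support graph, `F ∩ b = supp_b(F)`)
satisfies `r(F) = |F ∩ b|`. -/
theorem stmt5 (M : Matroid α) (hfin : M.E.Finite) (hsimple : MSimple M)
    (b : Set α) (hb : IsCremonaBasis M b)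
    (F : Set α) (hF : M.IsFlat F) (hne : F.Nonempty)
    (hconn : SuppConnected M b F) (hFb : F ∩ b = suppb M b F) :
    mRank M F = (F ∩ b).ncard := by
  have hFE : F ⊆ M.E := hF.subset_ground
  -- every element of F is in the closure of F ∩ b
  have hFcl : F ⊆ M.closure (F ∩ b) := by
    intro e he
    by_cases heb : e ∈ b
    · exact M.subset_closure (F ∩ b) (inter_subset_left.trans hFE) ⟨he, heb⟩
    · have he' : e ∈ M.E \ b := ⟨hFE he, heb⟩
      rw [← hb.2.2] at he'
      simp only [mem_iUnion] at he'
      obtain ⟨x, hxb, y, hyb, hxy, heFij⟩ := he'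
      have hsub : ({x, y} : Set α) ⊆ suppb M b F := by
        intro z hz
        refine Or.inr ?_
        simp only [mem_iUnion]
        exact ⟨x, hxb, y, hyb, hxy, ⟨e, he, heFij⟩, hz⟩
      rw [← hFb] at hsub
      exact M.closure_subset_closure hsub heFij.1
  have hJ : M.Indep (F ∩ b) := hb.1.indep.subset inter_subset_right
  have hbasis : M.IsBasis (F ∩ b) F :=
    hJ.isBasis_of_subset_of_subset_closure inter_subset_left hFcl
  set S : Set ℕ := {n | ∃ I, M.Indep I ∧ I ⊆ F ∧ I.ncard = n} with hS
  have hmem : (F ∩ b).ncard ∈ S := ⟨F ∩ b, hJ, inter_subset_left, rfl⟩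
  have hbdd : ∀ n ∈ S, n ≤ (F ∩ b).ncard := by
    rintro n ⟨I, hI, hIF, rfl⟩
    obtain ⟨I', hI'basis, hII'⟩ := hI.subset_isBasis_of_subset hIF
    have h1 : I.ncard ≤ I'.ncard :=
      Set.ncard_le_ncard hII' (hfin.subset (hI'basis.indep.subset_ground))
    have h2 : I'.encard = (F ∩ b).encard := hI'basis.encard_eq_encard hbasis
    have h3 : I'.ncard = (F ∩ b).ncard := by
      simp only [Set.ncard, h2]
    omega
  exact le_antisymm (csSup_le ⟨_, hmem⟩ hbdd) (le_csSup ⟨_, hbdd⟩ hmem)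
end

section
/- Let M be a simple matroid with Cremona basis b and let F be a connected flat of M. Then the support graph G_b(F) is connected. -/
open Set

variable {α : Type*}

lemma skew_lemma (M : Matroid α) (hfin : M.E.Finite) {b A X : Set α}
    (hb : M.IsBase b) (hA : A ⊆ b) (hX : X ⊆ M.closure A) :
    M.closure (X ∪ (b \ A)) ∩ M.closure A ⊆ M.closure X := by
  have hXE : X ⊆ M.E := hX.trans (M.closure_subset_ground A)
  obtain ⟨I, hI⟩ := M.exists_isBasis X hXE
  obtain ⟨K, hK, hIK⟩ := hI.indep.subset_isBasis_of_subset (hI.subset.trans hX)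
  have hKA : M.closure K = M.closure A := by
    rw [hK.closure_eq_closure, M.closure_closure]
  have hKsub : K ⊆ M.closure A := hK.subset
  have hdisjKB : Disjoint K (b \ A) := by
    rw [disjoint_left]
    rintro z hzK ⟨hzb, hzA⟩
    have h1 : M.closure A ⊆ M.closure (b \ {z}) :=
      M.closure_subset_closure (subset_diff_singleton hA hzA)
    exact hb.indep.notMem_closure_diff_of_mem hzb (h1 (hKsub hzK))
  have hspan : M.closure (K ∪ (b \ A)) = M.E := by
    rw [← M.closure_union_closure_left_eq, hKA, M.closure_union_closure_left_eq,
      union_diff_cancel hA, hb.closure_eq]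
  have hKBE : K ∪ (b \ A) ⊆ M.E :=
    union_subset (hKsub.trans (M.closure_subset_ground A)) ((diff_subset).trans hb.subset_ground)
  have hsp : M.Spanning (K ∪ (b \ A)) := by
    rw [Matroid.spanning_iff_closure_eq hKBE]; exact hspan
  obtain ⟨B0, hB0, hB0sub⟩ := hsp.exists_isBase_subset
  have hAbasis : M.IsBasis A (M.closure A) := (hb.indep.subset hA).isBasis_closure
  have hKcard : K.encard = A.encard := hK.encard_eq_encard hAbasis
  have hcard : (K ∪ (b \ A)).encard = b.encard := by
    rw [encard_union_eq hdisjKB, hKcard, add_comm, encard_diff_add_encard_of_subset hA]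
  have hB0card : B0.encard = b.encard := hB0.encard_eq_encard_of_isBase hb
  have hKBfin : (K ∪ (b \ A)).Finite := hfin.subset hKBE
  have hB0eq : B0 = K ∪ (b \ A) :=
    (hKBfin.subset hB0sub).eq_of_subset_of_encard_le hB0sub (by rw [hcard, hB0card])
  have hKBindep : M.Indep (K ∪ (b \ A)) := hB0eq ▸ hB0.indep
  have hind : M.Indep ((I ∪ (b \ A)) ∪ K) := by
    have : (I ∪ (b \ A)) ∪ K = K ∪ (b \ A) := by
      ext z
      constructor
      · rintro (⟨hz | hz⟩ | hz)
        · exact Or.inl (hIK hz)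
        · exact Or.inr hz
        · exact Or.inl hz
      · rintro (hz | hz)
        · exact Or.inr hz
        · exact Or.inl (Or.inr hz)
    rw [this]; exact hKBindep
  have hinter := hind.closure_inter_eq_inter_closure
  have hIeq : (I ∪ (b \ A)) ∩ K = I := by
    rw [union_inter_distrib_right, (hdisjKB.symm).inter_eq, inter_eq_left.mpr hIK, union_empty]
  rw [hIeq, hKA] at hinter
  have hclI : M.closure (I ∪ (b \ A)) = M.closure (X ∪ (b \ A)) := by
    rw [← M.closure_union_closure_left_eq, hI.closure_eq_closure,
      M.closure_union_closure_left_eq]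
  rw [hclI, hI.closure_eq_closure] at hinter
  exact hinter.symm.subset

lemma simple_closure_empty (M : Matroid α) (hs : MSimple M) : M.closure ∅ = ∅ := by
  by_contra h
  obtain ⟨e, he⟩ := nonempty_iff_ne_empty.mpr h
  have heE : e ∈ M.E := M.closure_subset_ground ∅ he
  have hind : M.Indep {e} := by
    have := hs e heE e heE
    rwa [pair_eq_singleton] at this
  have := hind.notMem_closure_diff_of_mem (mem_singleton e)
  rw [diff_self] at this
  exact this he

lemma cl_compl_disjoint (M : Matroid α) (hs : MSimple M) {b A : Set α}
    (hb : M.IsBase b) (hA : A ⊆ b) : M.closure A ∩ M.closure (b \ A) = ∅ := by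
  have hind : M.Indep (A ∪ (b \ A)) := by
    rw [union_diff_cancel hA]; exact hb.indep
  have := hind.closure_inter_eq_inter_closure
  rw [inter_diff_self, simple_closure_empty M hs] at this
  exact this.symm

lemma adjb_symm (M : Matroid α) (b S : Set α) : Symmetric (Adjb M b S) := by
  rintro u v ⟨hu, hv, huv, hne⟩
  refine ⟨hv, hu, huv.symm, ?_⟩
  rwa [show Fij M v u = Fij M u v by rw [Fij, Fij, pair_comm]]

lemma suppb_subset_b (M : Matroid α) (b S : Set α) : suppb M b S ⊆ b := by
  rintro z (⟨hz, -⟩ | hz)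
  · exact hz
  · simp only [mem_iUnion] at hz
    obtain ⟨i, hi, j, hj, -, -, hz⟩ := hz
    rcases hz with rfl | rfl
    · exact hi
    · exact hj

lemma endpoints_mem_suppb (M : Matroid α) {b S : Set α} {i j : α}
    (h : Adjb M b S i j) : i ∈ suppb M b S ∧ j ∈ suppb M b S := by
  obtain ⟨hi, hj, hij, hne⟩ := h
  constructor <;>
  · refine Or.inr ?_
    simp only [mem_iUnion]
    exact ⟨i, hi, j, hj, hij, hne, by simp⟩

/-- Every connected flat of a simple matroid with a Cremona basis is
support-connected. -/
theorem stmt6 (M : Matroid α) (hfin : M.E.Finite) (hsimple : MSimple M)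
    (b : Set α) (hb : IsCremonaBasis M b)
    (F : Set α) (hF : M.IsFlat F) (hFconn : MConnected (M.restrict F)) :
    SuppConnected M b F := by
  obtain ⟨hbase, hdisj, hcover⟩ := hb
  have hFE : F ⊆ M.E := hF.subset_ground
  have hbE : b ⊆ M.E := hbase.subset_ground
  intro x hx y hy
  by_contra hpath
  have hsymm : Symmetric (Relation.ReflTransGen (Adjb M b F)) :=
    by haveI : Std.Symm (Adjb M b F) := ⟨adjb_symm M b F⟩; exact fun _ _ h => Std.Symm.symm _ _ h
  set A := compOf M b F x with hAdef
  have hAsupp : A ⊆ suppb M b F := fun z hz => hz.1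
  have hAb : A ⊆ b := hAsupp.trans (suppb_subset_b M b F)
  have hxA : x ∈ A := ⟨hx, Relation.ReflTransGen.refl⟩
  -- components of any z ∈ suppb
  have hcompb : ∀ z : α, compOf M b F z ⊆ b :=
    fun z w hw => suppb_subset_b M b F hw.1
  -- an edge with one endpoint in a component has both endpoints in it
  have hstep : ∀ (z i j : α), Adjb M b F i j → i ∈ compOf M b F z → j ∈ compOf M b F z :=
    fun z i j hadj hi => ⟨(endpoints_mem_suppb M hadj).2, hi.2.tail hadj⟩
  -- location of elements of F
  have hloc : ∀ g ∈ F, g ∈ M.closure A ∨ g ∈ M.closure (b \ A) := by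
    intro g hg
    by_cases hgb : g ∈ b
    · by_cases hgA : g ∈ A
      · exact Or.inl (M.subset_closure A (hAb.trans hbE) hgA)
      · exact Or.inr (M.subset_closure (b \ A) ((diff_subset).trans hbE) ⟨hgb, hgA⟩)
    · have hgEb : g ∈ M.E \ b := ⟨hFE hg, hgb⟩
      rw [← hcover] at hgEb
      simp only [mem_iUnion] at hgEb
      obtain ⟨i, hi, j, hj, hij, hgij⟩ := hgEb
      have hadj : Adjb M b F i j := ⟨hi, hj, hij, ⟨g, hg, hgij⟩⟩
      have hgcl : g ∈ M.closure {i, j} := hgij.1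
      by_cases hiA : i ∈ A
      · left
        have hjA : j ∈ A := hstep x i j hadj hiA
        exact M.closure_subset_closure (pair_subset hiA hjA) hgcl
      · right
        have hjA : j ∉ A := fun hjA => hiA (hstep x j i (adjb_symm M b F hadj) hjA)
        exact M.closure_subset_closure (pair_subset (mem_diff i |>.mpr ⟨hi, hiA⟩) (mem_diff j |>.mpr ⟨hj, hjA⟩)) hgcl
  -- witness elements
  have hwit : ∀ z ∈ suppb M b F, ∃ e ∈ F,
      e ∈ M.closure (compOf M b F z) ∧ e ∉ M.closure (b \ compOf M b F z) := by
    intro z hz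
    have hzcomp : z ∈ compOf M b F z := ⟨hz, Relation.ReflTransGen.refl⟩
    rcases hz with ⟨hzb, hzF⟩ | hz
    · refine ⟨z, hzF, M.subset_closure _ ((hcompb z).trans hbE) hzcomp, fun hcl => ?_⟩
      have h1 : M.closure (b \ compOf M b F z) ⊆ M.closure (b \ {z}) :=
        M.closure_subset_closure (diff_subset_diff_right (singleton_subset_iff.mpr hzcomp))
      exact hbase.indep.notMem_closure_diff_of_mem hzb (h1 hcl)
    · simp only [mem_iUnion] at hz
      obtain ⟨i, hi, j, hj, hij, hne, hzij⟩ := hz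
      obtain ⟨e, heF, heij⟩ := hne
      have hadj : Adjb M b F i j := ⟨hi, hj, hij, ⟨e, heF, heij⟩⟩
      have hicomp : i ∈ compOf M b F z := by
        rcases hzij with rfl | rfl
        · exact hzcomp
        · exact hstep z _ i (adjb_symm M b F hadj) hzcomp
      have hjcomp : j ∈ compOf M b F z := hstep z i j hadj hicomp
      refine ⟨e, heF, M.closure_subset_closure (pair_subset hicomp hjcomp) heij.1, ?_⟩
      intro hcl
      have h0 : e ∈ M.closure (compOf M b F z) ∩ M.closure (b \ compOf M b F z) :=
        ⟨M.closure_subset_closure (pair_subset hicomp hjcomp) heij.1, hcl⟩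
      rw [cl_compl_disjoint M hsimple hbase (hcompb z)] at h0
      exact h0
  obtain ⟨ex, hexF, hexclA, hexnB⟩ := hwit x hx
  obtain ⟨ey, heyF, heyclA', heynB'⟩ := hwit y hy
  set A' := compOf M b F y with hA'def
  have hdisjAA' : ∀ z, z ∈ A → z ∉ A' := by
    intro z hzA hzA'
    exact hpath (hzA.2.trans (hsymm hzA'.2))
  have hA'sub : A' ⊆ b \ A := fun z hz => ⟨hcompb y hz, fun hzA => hdisjAA' z hzA hz⟩
  have hAsub : A ⊆ b \ A' := fun z hz => ⟨hAb hz, hdisjAA' z hz⟩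
  have heyclB : ey ∈ M.closure (b \ A) := M.closure_subset_closure hA'sub heyclA'
  have heynA : ey ∉ M.closure A := fun h => heynB' (M.closure_subset_closure hAsub h)
  -- a circuit through the two witnesses
  have hgr : (M.restrict F).E = F := by simp
  have hne : ex ≠ ey := fun h => heynA (h ▸ hexclA)
  obtain ⟨C, hC, hexC, heyC⟩ :=
    (hFconn.2 ex (by rw [hgr]; exact hexF) ey (by rw [hgr]; exact heyF)).resolve_left hne
  have hCF : C ⊆ F := by have := hC.1; rwa [hgr] at this
  have hCdep : ¬ M.Indep C := fun h => hC.2.1 (Matroid.restrict_indep_iff.mpr ⟨h, hCF⟩)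
  have hCdel : ∀ z ∈ C, M.Indep (C \ {z}) :=
    fun z hz => (Matroid.restrict_indep_iff.mp (hC.2.2 z hz)).1
  set CB := C \ M.closure A with hCBdef
  have heyCB : ey ∈ CB := ⟨heyC, heynA⟩
  have hCBind : M.Indep CB := (hCdel ex hexC).subset
    (fun z hz => ⟨hz.1, fun h => hz.2 (by rw [mem_singleton_iff] at h; rw [h]; exact hexclA)⟩)
  have hCBcl : CB ⊆ M.closure (b \ A) := fun z hz => (hloc z (hCF hz.1)).resolve_left hz.2
  have heycl : ey ∈ M.closure (C \ {ey}) := by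
    by_contra h
    have h2 := ((hCdel ey heyC).notMem_closure_iff (hFE heyF)).mp h
    rw [insert_diff_singleton, insert_eq_of_mem heyC] at h2
    exact hCdep h2.1
  have hsub : C \ {ey} ⊆ (CB \ {ey}) ∪ M.closure A := by
    rintro z ⟨hzC, hz⟩
    by_cases hzA : z ∈ M.closure A
    · exact Or.inr hzA
    · exact Or.inl ⟨⟨hzC, hzA⟩, hz⟩
  have hkey : ey ∈ M.closure ((CB \ {ey}) ∪ A) := by
    have hcl2 : M.closure (C \ {ey}) ⊆ M.closure ((CB \ {ey}) ∪ A) := by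
      rw [← M.closure_union_closure_right_eq]
      exact M.closure_subset_closure hsub
    exact hcl2 heycl
  have hXcl : CB \ {ey} ⊆ M.closure (b \ A) := (diff_subset).trans hCBcl
  have hskew := skew_lemma M hfin hbase (diff_subset : b \ A ⊆ b) hXcl
  rw [diff_diff_cancel_left hAb] at hskew
  exact hCBind.notMem_closure_diff_of_mem heyCB (hskew ⟨hkey, heyclB⟩)
end
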